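/- For every positive integer k and variables X_1,...,X_k, in the group algebra Q[S(k)] one has X_1·(X_2 - J_2)···(X_k - J_k) = (-1)^k Σ_{σ∈S(k)} (∏_{c∈C(σ)} (-X_{min(c)})) σ, where C(σ) is the set of cycles (orbits) of σ on {1,...,k}. -/

import Mathlib

open Equiv Equiv.Perm

/-- The set of cycles (orbits, including fixed points) of a permutation of `Fin k`,
as the quotient of `Fin k` by the `SameCycle` relation. -/
def PermCycles {k : ℕ} (σ : Equiv.Perm (Fin k)) : Type :=
  Quotient (Equiv.Perm.SameCycle.setoid σ)

instance {k : ℕ} (σ : Equiv.Perm (Fin k)) : DecidableEq (PermCycles σ) :=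
  @Quotient.decidableEq _ (Equiv.Perm.SameCycle.setoid σ)
    (fun x y => (inferInstance : Decidable (σ.SameCycle x y)))

instance {k : ℕ} (σ : Equiv.Perm (Fin k)) : Fintype (PermCycles σ) :=
  Fintype.ofSurjective (fun a => Quotient.mk (Equiv.Perm.SameCycle.setoid σ) a)
    (fun c => c.exists_rep)

/-- The cycle of `σ` containing `a`. -/
def cycleMk {k : ℕ} (σ : Equiv.Perm (Fin k)) (a : Fin k) : PermCycles σ :=
  Quotient.mk (Equiv.Perm.SameCycle.setoid σ) a

/-- The elements of a cycle `c` of `σ`, as a `Finset`. -/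
def cycleElems {k : ℕ} (σ : Equiv.Perm (Fin k)) (c : PermCycles σ) : Finset (Fin k) :=
  Finset.univ.filter (fun a => cycleMk σ a = c)

lemma cycleElems_nonempty {k : ℕ} (σ : Equiv.Perm (Fin k)) (c : PermCycles σ) :
    (cycleElems σ c).Nonempty := by
  obtain ⟨a, ha⟩ := c.exists_rep
  exact ⟨a, by
    show a ∈ Finset.univ.filter (fun a => cycleMk σ a = c)
    exact Finset.mem_filter.mpr ⟨Finset.mem_univ _, ha⟩⟩

/-- The minimal element of a cycle of `σ`. -/
def cycMin {k : ℕ} (σ : Equiv.Perm (Fin k)) (c : PermCycles σ) : Fin k :=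
  (cycleElems σ c).min' (cycleElems_nonempty σ c)

/-- The number of cycles (orbits, including fixed points) of `σ`. -/
def cycleCount {k : ℕ} (σ : Equiv.Perm (Fin k)) : ℕ :=
  Fintype.card (PermCycles σ)

/-- The maximum of `φ` over the cycle `c`. -/
def cycMaxVal {k m : ℕ} (σ : Equiv.Perm (Fin k)) (φ : Fin k → Fin m) (c : PermCycles σ) :
    Fin m :=
  ((cycleElems σ c).image φ).max' ((cycleElems_nonempty σ c).image φ)

/-- The Jucys–Murphy element `J_i = (1 i) + (2 i) + ⋯ + (i-1 i)` in the group algebra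
of `S(k)` with coefficients in a commutative ring `R` (so `J_1 = 0`). -/
noncomputable def JM {k : ℕ} (R : Type*) [CommRing R] (i : Fin k) :
    MonoidAlgebra R (Equiv.Perm (Fin k)) :=
  ∑ j ∈ Finset.univ.filter (· < i), MonoidAlgebra.of R (Equiv.Perm (Fin k)) (Equiv.swap j i)


section Aux
open Finset

variable {k : ℕ}

lemma sc_fwd (σ : Equiv.Perm (Fin k)) (N j : Fin k) (hN : σ N = N) (x y : Fin k)
    (hx : x ≠ N) (h : σ.SameCycle x y) : (σ * Equiv.swap j N).SameCycle x y := by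
  set σ' := σ * Equiv.swap j N with hσ'
  obtain ⟨m, -, rfl⟩ := h.exists_pow_eq'
  clear h
  induction m with
  | zero => exact Equiv.Perm.SameCycle.refl _ _
  | succ m ih =>
    have hz : (σ ^ m) x ≠ N := by
      intro hc
      apply hx
      have hfix : (σ ^ m) N = N := Function.IsFixedPt.perm_pow hN m
      exact (σ ^ m).injective (hc.trans hfix.symm)
    refine ih.trans ?_
    rw [pow_succ', Equiv.Perm.mul_apply]
    set z := (σ ^ m) x with hzdef
    by_cases hj : z = j
    · have h1 : σ' z = N := by
        rw [hσ', Equiv.Perm.mul_apply, hj, Equiv.swap_apply_left, hN]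
      have h2 : σ' N = σ z := by
        rw [hσ', Equiv.Perm.mul_apply, Equiv.swap_apply_right, hj]
      have : σ z = σ' (σ' z) := by rw [h1, h2]
      rw [this, sameCycle_apply_right, sameCycle_apply_right]
    · have : σ z = σ' z := by
        rw [hσ', Equiv.Perm.mul_apply, Equiv.swap_apply_of_ne_of_ne hj hz]
      rw [this, sameCycle_apply_right]

lemma sc_bwd (σ : Equiv.Perm (Fin k)) (N j : Fin k) (hN : σ N = N) (hjN : j ≠ N)
    (x y : Fin k) (hx : x ≠ N) (hy : y ≠ N)
    (h : (σ * Equiv.swap j N).SameCycle x y) : σ.SameCycle x y := by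
  set σ' := σ * Equiv.swap j N with hσ'
  have key : ∀ m : ℕ, (σ' ^ m) x ≠ N → σ.SameCycle x ((σ' ^ m) x) := by
    intro m
    induction m using Nat.strong_induction_on with
    | _ m IH =>
      match m with
      | 0 => exact fun _ => Equiv.Perm.SameCycle.refl _ _
      | Nat.succ m =>
        intro hy'
        rw [pow_succ', Equiv.Perm.mul_apply] at hy' ⊢
        set z := (σ' ^ m) x with hzdef
        by_cases hzN : z = N
        · match m, hzdef, hzN with
          | 0, hzdef, hzN =>
            have hxN : x = N := by rw [hzdef, pow_zero] at hzN; simpa using hzN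
            exact absurd hxN hx
          | Nat.succ m', hzdef, hzN =>
            have hprev : (σ' ^ m') x = j := by
              apply σ'.injective
              rw [← Equiv.Perm.mul_apply, ← pow_succ', ← hzdef, hzN]
              rw [hσ', Equiv.Perm.mul_apply, Equiv.swap_apply_left, hN]
            have h1 : σ.SameCycle x j := hprev ▸ IH m' (by omega) (hprev ▸ hjN)
            have h2 : σ' z = σ j := by
              rw [hzN, hσ', Equiv.Perm.mul_apply, Equiv.swap_apply_right]
            rw [h2]
            exact h1.trans ⟨1, by simp⟩
        · have hzj : z ≠ j := by
            intro hc
            apply hy'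
            rw [hc, hσ', Equiv.Perm.mul_apply, Equiv.swap_apply_left, hN]
          have h2 : σ' z = σ z := by
            rw [hσ', Equiv.Perm.mul_apply, Equiv.swap_apply_of_ne_of_ne hzj hzN]
          rw [h2]
          exact (IH m (by omega) hzN).trans ⟨1, by simp [hzdef]⟩
  obtain ⟨m, -, rfl⟩ := h.exists_pow_eq'
  exact key m hy

/-- i is the minimum of its cycle -/
def CMin (σ : Equiv.Perm (Fin k)) (i : Fin k) : Prop := ∀ m, σ.SameCycle i m → i ≤ m

instance (σ : Equiv.Perm (Fin k)) (i : Fin k) : Decidable (CMin σ i) :=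
  inferInstanceAs (Decidable (∀ m, σ.SameCycle i m → i ≤ m))

def minsSet (σ : Equiv.Perm (Fin k)) (n : ℕ) : Finset (Fin k) :=
  Finset.univ.filter (fun i => i.val < n ∧ CMin σ i)

noncomputable def coefP (σ : Equiv.Perm (Fin k)) (n : ℕ) : MvPolynomial (Fin k) ℚ :=
  ∏ i ∈ minsSet σ n, (- MvPolynomial.X i)

lemma sameCycle_fixed (σ : Equiv.Perm (Fin k)) (N x : Fin k) (hN : σ N = N)
    (h : σ.SameCycle x N) : x = N := by
  obtain ⟨t, ht⟩ := h.symm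
  have : (σ ^ t) N = N := Function.IsFixedPt.perm_zpow hN t
  rw [this] at ht
  exact ht.symm

lemma cmin_fixed (σ : Equiv.Perm (Fin k)) (N : Fin k) (hN : σ N = N) : CMin σ N := by
  intro m hm
  rw [sameCycle_fixed σ N m hN hm.symm]

lemma minsSet_succ_fixed (σ : Equiv.Perm (Fin k)) (N : Fin k) (hN : σ N = N) :
    minsSet σ (N.val + 1) = insert N (minsSet σ N.val) := by
  ext i
  simp only [minsSet, Finset.mem_filter, Finset.mem_univ, true_and, Finset.mem_insert]
  constructor
  · rintro ⟨h1, h2⟩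
    rcases Nat.lt_succ_iff_lt_or_eq.mp h1 with h | h
    · exact Or.inr ⟨h, h2⟩
    · exact Or.inl (Fin.ext h)
  · rintro (h | ⟨h1, h2⟩)
    · rw [h]; exact ⟨Nat.lt_succ_self _, cmin_fixed σ N hN⟩
    · exact ⟨Nat.lt_succ_of_lt h1, h2⟩

lemma minsSet_succ_swap (σ : Equiv.Perm (Fin k)) (N j : Fin k) (hN : σ N = N) (hj : j < N) :
    minsSet (σ * Equiv.swap j N) (N.val + 1) = minsSet σ N.val := by
  have hjN : j ≠ N := ne_of_lt hj
  have hscjN : (σ * Equiv.swap j N).SameCycle j N := by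
    refine ⟨1, ?_⟩
    show (σ * Equiv.swap j N) j = N
    rw [Equiv.Perm.mul_apply, Equiv.swap_apply_left, hN]
  ext i
  simp only [minsSet, Finset.mem_filter, Finset.mem_univ, true_and]
  constructor
  · rintro ⟨h1, h2⟩
    have hiN : i ≠ N := by
      rintro rfl
      exact absurd (h2 j hscjN.symm) (not_le.mpr hj)
    have h1' : i.val < N.val := by
      rcases Nat.lt_succ_iff_lt_or_eq.mp h1 with h | h
      · exact h
      · exact absurd (Fin.ext h) hiN
    refine ⟨h1', fun m hm => ?_⟩
    exact h2 m (sc_fwd σ N j hN i m hiN hm)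
  · rintro ⟨h1, h2⟩
    have hiN : i ≠ N := by
      intro hc
      rw [hc] at h1
      omega
    refine ⟨Nat.lt_succ_of_lt h1, fun m hm => ?_⟩
    by_cases hmN : m = N
    · subst hmN
      exact le_of_lt (Fin.lt_def.mpr h1)
    · exact h2 m (sc_bwd σ N j hN hjN i m hiN hmN hm)

lemma coefP_eq_prod_cycles (σ : Equiv.Perm (Fin k)) :
    coefP σ k = ∏ c : PermCycles σ, (- MvPolynomial.X (cycMin σ c) : MvPolynomial (Fin k) ℚ) := by
  have hmem : ∀ c : PermCycles σ, cycMin σ c ∈ cycleElems σ c := fun c =>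
    (cycleElems σ c).min'_mem _
  have hmk : ∀ c : PermCycles σ, cycleMk σ (cycMin σ c) = c := by
    intro c
    have := hmem c
    simp only [cycleElems, Finset.mem_filter] at this
    exact this.2
  symm
  refine Finset.prod_nbij' (fun c => cycMin σ c) (fun i => cycleMk σ i) ?_ ?_ ?_ ?_ ?_
  · intro c _
    simp only [minsSet, Finset.mem_filter, Finset.mem_univ, true_and]
    refine ⟨(cycMin σ c).isLt, fun m hm => ?_⟩
    have hmmem : m ∈ cycleElems σ c := by
      simp only [cycleElems, Finset.mem_filter, Finset.mem_univ, true_and]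
      rw [← hmk c]
      exact Quot.sound hm.symm
    exact (cycleElems σ c).min'_le m hmmem
  · intro i _
    exact Finset.mem_univ _
  · intro c _
    exact hmk c
  · intro i hi
    simp only [minsSet, Finset.mem_filter, Finset.mem_univ, true_and] at hi
    have h1 : i ∈ cycleElems σ (cycleMk σ i) := by
      simp [cycleElems]
    have h2 : (cycleElems σ (cycleMk σ i)).min' _ ≤ i := Finset.min'_le _ _ h1
    have h3 : i ≤ cycMin σ (cycleMk σ i) := by
      apply hi.2
      have := hmk (cycleMk σ i)
      exact (Quotient.exact this : σ.SameCycle (cycMin σ (cycleMk σ i)) i).symm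
    exact le_antisymm h2 h3
  · intro c _
    rfl

end Aux
section Main2

def FixSet (k n : ℕ) : Finset (Equiv.Perm (Fin k)) :=
  Finset.univ.filter (fun σ => ∀ i : Fin k, n ≤ i.val → σ i = i)

lemma coefP_succ_fixed {k : ℕ} (σ : Equiv.Perm (Fin k)) (N : Fin k) (hN : σ N = N) :
    coefP σ (N.val + 1) = (- MvPolynomial.X N) * coefP σ N.val := by
  rw [coefP, coefP, minsSet_succ_fixed σ N hN, Finset.prod_insert]
  simp only [minsSet, Finset.mem_filter, Finset.mem_univ, true_and, not_and]
  intro h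
  omega

lemma coefP_succ_swap {k : ℕ} (σ : Equiv.Perm (Fin k)) (N j : Fin k) (hN : σ N = N)
    (hj : j < N) : coefP (σ * Equiv.swap j N) (N.val + 1) = coefP σ N.val := by
  rw [coefP, coefP, minsSet_succ_swap σ N j hN hj]

lemma invariant (k : ℕ) : ∀ n, n ≤ k →
    ((List.ofFn (fun i : Fin k =>
        algebraMap (MvPolynomial (Fin k) ℚ) _ (MvPolynomial.X i)
          - JM (MvPolynomial (Fin k) ℚ) i)).take n).prod
      = (-1 : MonoidAlgebra (MvPolynomial (Fin k) ℚ) (Equiv.Perm (Fin k))) ^ n *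
        ∑ σ ∈ FixSet k n,
          coefP σ n • MonoidAlgebra.of (MvPolynomial (Fin k) ℚ) (Equiv.Perm (Fin k)) σ := by
  intro n
  induction n with
  | zero =>
    intro _
    have h0 : FixSet k 0 = {1} := by
      ext σ
      simp only [FixSet, Finset.mem_filter, Finset.mem_univ, true_and, Finset.mem_singleton]
      constructor
      · intro h
        exact Equiv.ext fun i => h i (Nat.zero_le _)
      · intro h i _
        rw [h]; rfl
    have h1 : coefP (1 : Equiv.Perm (Fin k)) 0 = 1 := by
      rw [coefP]
      have : minsSet (1 : Equiv.Perm (Fin k)) 0 = ∅ := by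
        ext i; simp [minsSet]
      rw [this, Finset.prod_empty]
    rw [h0]
    simp [h1, MonoidAlgebra.one_def]
  | succ n IH =>
    intro hn1
    have hn : n ≤ k := Nat.le_of_succ_le hn1
    set R := MvPolynomial (Fin k) ℚ
    set G := Equiv.Perm (Fin k)
    set off : G →* MonoidAlgebra R G := MonoidAlgebra.of R G with hoff
    set L := List.ofFn (fun i : Fin k =>
        algebraMap R (MonoidAlgebra R G) (MvPolynomial.X i) - JM R i) with hL
    have hlen : n < L.length := by simp [hL]; omega
    set N : Fin k := ⟨n, hn1⟩ with hNdef
    have hNval : N.val = n := rfl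
    have hgetn : L[n] = algebraMap R (MonoidAlgebra R G) (MvPolynomial.X N) - JM R N :=
      List.getElem_ofFn hlen
    rw [List.prod_take_succ L n hlen, hgetn, IH hn]
    -- abbreviations
    set Sn : MonoidAlgebra R G := ∑ σ ∈ FixSet k n, coefP σ n • off σ with hSn
    -- basic membership fact
    have hmemN : ∀ σ ∈ FixSet k n, σ N = N := by
      intro σ hσ
      simp only [FixSet, Finset.mem_filter, Finset.mem_univ, true_and] at hσ
      exact hσ N (le_of_eq hNval.symm)
    -- A1 : Sn * algX
    have hA : Sn * algebraMap R (MonoidAlgebra R G) (MvPolynomial.X N)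
        = ∑ σ ∈ FixSet k n, (coefP σ n * MvPolynomial.X N) • off σ := by
      rw [hSn, Finset.sum_mul]
      refine Finset.sum_congr rfl fun σ _ => ?_
      rw [smul_mul_assoc, ← Algebra.commutes (MvPolynomial.X N) (off σ),
        ← Algebra.smul_def, smul_smul, mul_comm (coefP σ n) (MvPolynomial.X N),
        mul_comm (MvPolynomial.X N) (coefP σ n)]
    -- A2 : Sn * JM
    have hJ : Sn * JM R N
        = ∑ σ ∈ FixSet k n, ∑ j ∈ Finset.univ.filter (· < N),
            coefP σ n • off (σ * Equiv.swap j N) := by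
      rw [hSn, Finset.sum_mul]
      refine Finset.sum_congr rfl fun σ _ => ?_
      rw [JM, Finset.mul_sum]
      refine Finset.sum_congr rfl fun j _ => ?_
      rw [smul_mul_assoc, ← map_mul]
    -- split of S_{n+1}
    have hfix : (FixSet k (n+1)).filter (fun σ => σ N = N) = FixSet k n := by
      ext σ
      simp only [FixSet, Finset.mem_filter, Finset.mem_univ, true_and]
      constructor
      · rintro ⟨h1, h2⟩ i hi
        rcases Nat.lt_or_ge i.val (n+1) with h | h
        · have : i = N := Fin.ext (by omega)
          rw [this]; exact h2
        · exact h1 i h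
      · intro h
        exact ⟨fun i hi => h i (by omega), h N (le_of_eq hNval.symm)⟩
    have hsplit : ∑ σ ∈ FixSet k (n+1), coefP σ (n+1) • off σ
        = (∑ σ ∈ FixSet k n, coefP σ (n+1) • off σ)
          + ∑ σ ∈ (FixSet k (n+1)).filter (fun σ => ¬ σ N = N), coefP σ (n+1) • off σ := by
      rw [← hfix]
      exact (Finset.sum_filter_add_sum_filter_not _ _ _).symm
    -- part A equals minus Sn * algX
    have hpartA : ∑ σ ∈ FixSet k n, coefP σ (n+1) • off σ
        = - (Sn * algebraMap R (MonoidAlgebra R G) (MvPolynomial.X N)) := by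
      rw [hA, ← Finset.sum_neg_distrib]
      refine Finset.sum_congr rfl fun σ hσ => ?_
      have : coefP σ (n+1) = - (coefP σ n * MvPolynomial.X N) := by
        have := coefP_succ_fixed σ N (hmemN σ hσ)
        rw [hNval] at this
        rw [this]; ring
      rw [this, neg_smul]
    -- part B equals Sn * JM
    have hpartB : ∑ σ ∈ FixSet k n, ∑ j ∈ Finset.univ.filter (· < N),
            coefP σ n • off (σ * Equiv.swap j N)
        = ∑ σ ∈ (FixSet k (n+1)).filter (fun σ => ¬ σ N = N), coefP σ (n+1) • off σ := by
      rw [← Finset.sum_product']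
      refine Finset.sum_nbij' (fun p => p.1 * Equiv.swap p.2 N)
        (fun τ => (τ * Equiv.swap (τ⁻¹ N) N, τ⁻¹ N)) ?_ ?_ ?_ ?_ ?_
      · rintro ⟨σ, j⟩ hp
        simp only [Finset.mem_product, Finset.mem_filter, Finset.mem_univ, true_and] at hp
        obtain ⟨hσ, hj⟩ := hp
        have hσfix : ∀ i : Fin k, n ≤ i.val → σ i = i := by
          simpa only [FixSet, Finset.mem_filter, Finset.mem_univ, true_and] using hσ
        have hσN : σ N = N := hσfix N (le_of_eq hNval.symm)
        have hjval : j.val < n := hj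
        simp only [FixSet, Finset.mem_filter, Finset.mem_univ, true_and]
        constructor
        · intro i hi
          have hij : i ≠ j := by intro h; rw [h] at hi; omega
          have hiN : i ≠ N := by intro h; rw [h] at hi; simp [hNval] at hi
          rw [Equiv.Perm.mul_apply, Equiv.swap_apply_of_ne_of_ne hij hiN]
          exact hσfix i (by omega)
        · intro hcon
          rw [Equiv.Perm.mul_apply, Equiv.swap_apply_right] at hcon
          have : j = N := σ.injective (hcon.trans hσN.symm)
          rw [this] at hjval; omega
      · intro τ hτ
        simp only [Finset.mem_filter, Finset.mem_univ, true_and, FixSet] at hτ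
        obtain ⟨hτfix, hτN⟩ := hτ
        have hj'N : τ⁻¹ N ≠ N := fun h => hτN (by conv_lhs => rw [← h]; rw [Equiv.Perm.coe_inv, Equiv.apply_symm_apply])
        have hj'val : (τ⁻¹ N).val < n := by
          by_contra h
          push_neg at h
          rcases Nat.lt_or_ge (τ⁻¹ N).val (n+1) with h2 | h2
          · exact hj'N (Fin.ext (by omega))
          · have := hτfix (τ⁻¹ N) h2
            rw [Equiv.Perm.coe_inv, Equiv.apply_symm_apply] at this
            exact hj'N this.symm
        simp only [Finset.mem_product, Finset.mem_filter, Finset.mem_univ, true_and, FixSet]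
        refine ⟨?_, hj'val⟩
        intro i hi
        by_cases hiN : i = N
        · rw [hiN, Equiv.Perm.mul_apply, Equiv.swap_apply_right, Equiv.Perm.coe_inv, Equiv.apply_symm_apply]
        · have hij' : i ≠ τ⁻¹ N := by
            intro h; rw [h] at hi; omega
          rw [Equiv.Perm.mul_apply, Equiv.swap_apply_of_ne_of_ne hij' hiN]
          have hi1 : n+1 ≤ i.val := by
            rcases Nat.lt_or_ge i.val (n+1) with h2 | h2
            · exact absurd (Fin.ext (by omega) : i = N) hiN
            · exact h2
          exact hτfix i hi1
      · rintro ⟨σ, j⟩ hp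
        simp only [Finset.mem_product, Finset.mem_filter, Finset.mem_univ, true_and] at hp
        obtain ⟨hσ, hj⟩ := hp
        have hσfix : ∀ i : Fin k, n ≤ i.val → σ i = i := by
          simpa only [FixSet, Finset.mem_filter, Finset.mem_univ, true_and] using hσ
        have hσN : σ N = N := hσfix N (le_of_eq hNval.symm)
        have hinv : (σ * Equiv.swap j N)⁻¹ N = j := by
          rw [mul_inv_rev, Equiv.Perm.mul_apply, Equiv.swap_inv]
          have : σ⁻¹ N = N := σ.injective (by rw [Equiv.Perm.coe_inv, Equiv.apply_symm_apply, hσN])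
          rw [this, Equiv.swap_apply_right]
        ext
        · simp only [hinv]
          rw [mul_assoc, Equiv.swap_mul_self, mul_one]
        · simp only [hinv]
      · intro τ hτ
        simp only
        rw [mul_assoc, Equiv.swap_mul_self, mul_one]
      · rintro ⟨σ, j⟩ hp
        simp only [Finset.mem_product, Finset.mem_filter, Finset.mem_univ, true_and] at hp
        obtain ⟨hσ, hj⟩ := hp
        have hσfix : ∀ i : Fin k, n ≤ i.val → σ i = i := by
          simpa only [FixSet, Finset.mem_filter, Finset.mem_univ, true_and] using hσ
        have hσN : σ N = N := hσfix N (le_of_eq hNval.symm)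
        have := coefP_succ_swap σ N j hσN hj
        rw [hNval] at this
        rw [this]
    -- final assembly
    have key : Sn * (algebraMap R (MonoidAlgebra R G) (MvPolynomial.X N) - JM R N)
        = - ∑ σ ∈ FixSet k (n+1), coefP σ (n+1) • off σ := by
      rw [mul_sub, hsplit, hpartA, ← hpartB, hJ, neg_add, neg_neg]
      abel
    rw [mul_assoc, key, pow_succ, mul_assoc]
    congr 1
    exact (neg_one_mul (∑ σ ∈ FixSet k (n+1), coefP σ (n+1) • off σ)).symm

end Main2
/-- **Lemma 1 (combinatorics of Jucys–Murphy elements).**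
For variables `X_1, …, X_k`, in `ℚ[X_1,…,X_k][S(k)]` one has
`X_1 (X_2 - J_2) ⋯ (X_k - J_k) = (-1)^k ∑_{σ ∈ S(k)} (∏_{c ∈ C(σ)} (-X_{min c})) σ`. -/
theorem stmt_0 (k : ℕ) (hk : 0 < k) :
    (List.ofFn (fun i : Fin k =>
        algebraMap (MvPolynomial (Fin k) ℚ) _ (MvPolynomial.X i) - JM (MvPolynomial (Fin k) ℚ) i)).prod
      = (-1 : MonoidAlgebra (MvPolynomial (Fin k) ℚ) (Equiv.Perm (Fin k))) ^ k *
        ∑ σ : Equiv.Perm (Fin k),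
          (∏ c : PermCycles σ, (- MvPolynomial.X (cycMin σ c) : MvPolynomial (Fin k) ℚ)) •
            MonoidAlgebra.of (MvPolynomial (Fin k) ℚ) (Equiv.Perm (Fin k)) σ := by
  have h := invariant k k le_rfl
  have htake : (List.ofFn (fun i : Fin k =>
      algebraMap (MvPolynomial (Fin k) ℚ) _ (MvPolynomial.X i)
        - JM (MvPolynomial (Fin k) ℚ) i)).take k
      = List.ofFn (fun i : Fin k =>
      algebraMap (MvPolynomial (Fin k) ℚ) _ (MvPolynomial.X i)
        - JM (MvPolynomial (Fin k) ℚ) i) :=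
    List.take_of_length_le (by simp)
  rw [htake] at h
  rw [h]
  have huniv : FixSet k k = Finset.univ := by
    ext σ
    simp only [FixSet, Finset.mem_filter, Finset.mem_univ, true_and, iff_true]
    intro i hi
    exact absurd hi (Nat.not_le.mpr i.isLt)
  rw [huniv]
  congr 1
  refine Finset.sum_congr rfl fun σ _ => ?_
  rw [coefP_eq_prod_cycles]
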